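/- arXiv:2007.08762 — 8 statements merged into one kernel-verified Lean document; each statement's English description precedes it below -/
import Mathlib

section
/- Let r*(ψ, λ, u, c) denote the unique r > 0 satisfying r·(√(1+8r/ψ²) + √(1+8(r+λ)/ψ²)) + λ·(√(1+8r/ψ²) + 1) = 4λ·(u/c + 1). Then r* is strictly increasing in each of λ, ψ, and the ratio u/c: for all positive parameters, (i) if λ' > λ then r*(ψ, λ', u, c) > r*(ψ, λ, u, c); (ii) if ψ' > ψ then r*(ψ', λ, u, c) > r*(ψ, λ, u, c); (iii) if u'/c' > u/c then r*(ψ, λ, u', c') > r*(ψ, λ, u, c). -/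
/-- The left-hand side of the equation defining the cutoff discount rate `r*`. -/
noncomputable def cutoffLHS (ψ lam r : ℝ) : ℝ :=
  r * (Real.sqrt (1 + 8 * r / ψ ^ 2) + Real.sqrt (1 + 8 * (r + lam) / ψ ^ 2))
    + lam * (Real.sqrt (1 + 8 * r / ψ ^ 2) + 1)

/-- `cutoffLHS` is strictly increasing in `r`. -/
lemma lhs_mono_r (ψ lam : ℝ) (hψ : 0 < ψ) (hlam : 0 < lam) {r r' : ℝ} (hr : 0 < r)
    (h : r < r') : cutoffLHS ψ lam r < cutoffLHS ψ lam r' := by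
  unfold cutoffLHS
  have hψ2 : 0 < ψ ^ 2 := by positivity
  gcongr

/-- `cutoffLHS` is strictly decreasing in `ψ`. -/
lemma lhs_anti_psi (lam r : ℝ) (hlam : 0 < lam) (hr : 0 < r) {ψ ψ' : ℝ} (hψ : 0 < ψ)
    (h : ψ < ψ') : cutoffLHS ψ' lam r < cutoffLHS ψ lam r := by
  unfold cutoffLHS
  have hψ2 : 0 < ψ ^ 2 := by positivity
  gcongr

/-- The key comparison for the λ-monotonicity: scaling λ to λ' > λ scales the LHS
by strictly less than the factor λ'/λ. -/
lemma lhs_lam (ψ r : ℝ) (hψ : 0 < ψ) (hr : 0 < r) {lam lam' : ℝ} (hlam : 0 < lam)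
    (h : lam < lam') : cutoffLHS ψ lam' r < (lam' / lam) * cutoffLHS ψ lam r := by
  have hψ2 : 0 < ψ ^ 2 := by positivity
  set t := lam' / lam with ht
  have ht1 : 1 < t := (one_lt_div hlam).2 h
  set s1 := Real.sqrt (1 + 8 * r / ψ ^ 2) with hs1
  set s2 := Real.sqrt (1 + 8 * (r + lam) / ψ ^ 2) with hs2
  have hs1pos : 0 < s1 := Real.sqrt_pos.2 (by positivity)
  have hs2pos : 0 < s2 := Real.sqrt_pos.2 (by positivity)
  have hs2sq : s2 ^ 2 = 1 + 8 * (r + lam) / ψ ^ 2 := Real.sq_sqrt (by positivity)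
  have key : Real.sqrt (1 + 8 * (r + lam') / ψ ^ 2) < t * s2 := by
    have h1 : 1 + 8 * (r + lam') / ψ ^ 2 < (t * s2) ^ 2 := by
      have : (t * s2) ^ 2 = t ^ 2 * (1 + 8 * (r + lam) / ψ ^ 2) := by
        rw [mul_pow, hs2sq]
      rw [this, ht, div_pow, div_mul_eq_mul_div, lt_div_iff₀ (by positivity)]
      have hne : (ψ:ℝ) ^ 2 ≠ 0 := ne_of_gt hψ2
      field_simp
      rw [← mul_lt_mul_iff_of_pos_right hψ2]
      have hd : 0 < lam' - lam := sub_pos.2 h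
      have hA : 0 < (lam' - lam) * (lam' + lam) * (ψ ^ 2 + 8 * r) * ψ ^ 2 :=
        mul_pos (mul_pos (mul_pos hd (by linarith)) (by positivity)) hψ2
      have hB : 0 < (lam' - lam) * lam * lam' * (8 * ψ ^ 2) :=
        mul_pos (mul_pos (mul_pos hd hlam) (hlam.trans h)) (by positivity)
      nlinarith [hA, hB]
    calc Real.sqrt (1 + 8 * (r + lam') / ψ ^ 2) < Real.sqrt ((t * s2) ^ 2) :=
          Real.sqrt_lt_sqrt (by have := hlam.trans h; positivity) h1
      _ = t * s2 := Real.sqrt_sq (mul_pos (lt_trans one_pos ht1) hs2pos).le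
  have hsum : s1 + Real.sqrt (1 + 8 * (r + lam') / ψ ^ 2) < t * (s1 + s2) := by
    nlinarith [key, hs1pos]
  have hlam' : lam' = t * lam := by rw [ht]; field_simp
  unfold cutoffLHS
  rw [← hs1, ← hs2]
  calc r * (s1 + Real.sqrt (1 + 8 * (r + lam') / ψ ^ 2)) + lam' * (s1 + 1)
      < r * (t * (s1 + s2)) + lam' * (s1 + 1) := by gcongr
    _ = t * (r * (s1 + s2) + lam * (s1 + 1)) := by rw [hlam']; ring

/-- From a strict inequality of LHS values one can read off the inequality of roots. -/
lemma lt_of_lhs_lt (ψ lam : ℝ) (hψ : 0 < ψ) (hlam : 0 < lam) {r r' : ℝ} (hr : 0 < r)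
    (hr' : 0 < r') (h : cutoffLHS ψ lam r < cutoffLHS ψ lam r') : r < r' := by
  by_contra hc
  push_neg at hc
  rcases eq_or_lt_of_le hc with he | hlt
  · rw [he] at h; exact lt_irrefl _ h
  · exact absurd (lhs_mono_r ψ lam hψ hlam hr' hlt) (by linarith)

/-- The cutoff discount rate `r*` (the unique positive solution of
`cutoffLHS ψ lam r = 4·λ·(u/c + 1)`) is strictly increasing in each of λ, ψ, and u/c. -/
theorem cutoff_discount_rate_strict_mono :
    (∀ ψ lam lam' u c r r' : ℝ, 0 < ψ → 0 < lam → 0 < lam' → 0 < u → 0 < c →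
      0 < r → 0 < r' →
      cutoffLHS ψ lam r = 4 * lam * (u / c + 1) →
      cutoffLHS ψ lam' r' = 4 * lam' * (u / c + 1) →
      lam < lam' → r < r') ∧
    (∀ ψ ψ' lam u c r r' : ℝ, 0 < ψ → 0 < ψ' → 0 < lam → 0 < u → 0 < c →
      0 < r → 0 < r' →
      cutoffLHS ψ lam r = 4 * lam * (u / c + 1) →
      cutoffLHS ψ' lam r' = 4 * lam * (u / c + 1) →
      ψ < ψ' → r < r') ∧
    (∀ ψ lam u c u' c' r r' : ℝ, 0 < ψ → 0 < lam → 0 < u → 0 < c → 0 < u' → 0 < c' →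
      0 < r → 0 < r' →
      cutoffLHS ψ lam r = 4 * lam * (u / c + 1) →
      cutoffLHS ψ lam r' = 4 * lam * (u' / c' + 1) →
      u / c < u' / c' → r < r') := by
  refine ⟨?_, ?_, ?_⟩
  · intro ψ lam lam' u c r r' hψ hlam hlam' hu hc hr hr' hEq hEq' hll
    apply lt_of_lhs_lt ψ lam' hψ hlam' hr hr'
    calc cutoffLHS ψ lam' r < (lam' / lam) * cutoffLHS ψ lam r := lhs_lam ψ r hψ hr hlam hll
      _ = 4 * lam' * (u / c + 1) := by rw [hEq]; field_simp
      _ = cutoffLHS ψ lam' r' := hEq'.symm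
  · intro ψ ψ' lam u c r r' hψ hψ' hlam hu hc hr hr' hEq hEq' hpp
    apply lt_of_lhs_lt ψ' lam hψ' hlam hr hr'
    calc cutoffLHS ψ' lam r < cutoffLHS ψ lam r := lhs_anti_psi lam r hlam hr hψ hpp
      _ = cutoffLHS ψ' lam r' := by rw [hEq, hEq']
  · intro ψ lam u c u' c' r r' hψ hlam hu hc hu' hc' hr hr' hEq hEq' huc
    apply lt_of_lhs_lt ψ lam hψ hlam hr hr'
    rw [hEq, hEq']
    have : 0 < 4 * lam := by positivity
    nlinarith [huc]
end

section
/- Fix λ > 0, u > 0, c > 0. For each ψ > 0, let r*(ψ) be the unique r > 0 satisfying r·(√(1+8r/ψ²) + √(1+8(r+λ)/ψ²)) + λ·(√(1+8r/ψ²) + 1) = 4λ·(u/c + 1). Then r*(ψ) converges to λ·(2u/c + 1) as ψ → ∞. -/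
/-- Fix λ, u, c > 0; for each ψ > 0 let `rstar ψ` be the unique positive
solution of the cutoff equation.  Then `rstar ψ → λ·(2u/c + 1)` as ψ → ∞. -/
theorem cutoff_discount_rate_tendsto (lam u c : ℝ)
    (hlam : 0 < lam) (hu : 0 < u) (hc : 0 < c) (rstar : ℝ → ℝ)
    (hrstar : ∀ ψ : ℝ, 0 < ψ →
      0 < rstar ψ ∧ cutoffLHS ψ lam (rstar ψ) = 4 * lam * (u / c + 1)) :
    Filter.Tendsto rstar Filter.atTop (nhds (lam * (2 * u / c + 1))) := by
  set L := lam * (2 * u / c + 1) with hLdef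
  have hL : 0 < L := by
    have : 0 < 2 * u / c := by positivity
    have : 0 < 2 * u / c + 1 := by linarith
    positivity
  have hK : 4 * lam * (u / c + 1) = 2 * L + 2 * lam := by
    rw [hLdef]; field_simp; ring
  -- upper bound: rstar ψ ≤ L for all ψ > 0
  have hub : ∀ ψ : ℝ, 0 < ψ → rstar ψ ≤ L := by
    intro ψ hψ
    obtain ⟨hr, heq⟩ := hrstar ψ hψ
    set r := rstar ψ
    have ha : (1:ℝ) ≤ Real.sqrt (1 + 8 * r / ψ ^ 2) := by
      have hx : 0 ≤ 8 * r / ψ ^ 2 := by positivity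
      have h1 : (1:ℝ) ≤ 1 + 8 * r / ψ ^ 2 := by linarith
      calc (1:ℝ) = Real.sqrt 1 := Real.sqrt_one.symm
        _ ≤ _ := Real.sqrt_le_sqrt h1
    have hb : (1:ℝ) ≤ Real.sqrt (1 + 8 * (r + lam) / ψ ^ 2) := by
      have hx : 0 ≤ 8 * (r + lam) / ψ ^ 2 := by positivity
      have h1 : (1:ℝ) ≤ 1 + 8 * (r + lam) / ψ ^ 2 := by linarith
      calc (1:ℝ) = Real.sqrt 1 := Real.sqrt_one.symm
        _ ≤ _ := Real.sqrt_le_sqrt h1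
    rw [cutoffLHS, hK] at heq
    nlinarith [heq, mul_le_mul_of_nonneg_left ha hr.le,
      mul_le_mul_of_nonneg_left hb hr.le]
  -- lower bound function
  set g : ℝ → ℝ := fun ψ => (2 * L + 2 * lam) / (2 * Real.sqrt (1 + 8 * (L + lam) / ψ ^ 2)) - lam
    with hgdef
  have hlb : ∀ ψ : ℝ, 0 < ψ → g ψ ≤ rstar ψ := by
    intro ψ hψ
    obtain ⟨hr, heq⟩ := hrstar ψ hψ
    have hrL := hub ψ hψ
    set r := rstar ψ
    set s := Real.sqrt (1 + 8 * (L + lam) / ψ ^ 2) with hsdef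
    have hs1 : (1:ℝ) ≤ s := by
      have hx : 0 ≤ 8 * (L + lam) / ψ ^ 2 := by positivity
      have h1 : (1:ℝ) ≤ 1 + 8 * (L + lam) / ψ ^ 2 := by linarith
      rw [hsdef]
      calc (1:ℝ) = Real.sqrt 1 := Real.sqrt_one.symm
        _ ≤ _ := Real.sqrt_le_sqrt h1
    have hs0 : 0 < s := lt_of_lt_of_le one_pos hs1
    have ha : Real.sqrt (1 + 8 * r / ψ ^ 2) ≤ s := by
      apply Real.sqrt_le_sqrt
      have : 8 * r / ψ ^ 2 ≤ 8 * (L + lam) / ψ ^ 2 := by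
        apply div_le_div_of_nonneg_right ?_ (by positivity)
        linarith
      linarith
    have hb : Real.sqrt (1 + 8 * (r + lam) / ψ ^ 2) ≤ s := by
      apply Real.sqrt_le_sqrt
      have : 8 * (r + lam) / ψ ^ 2 ≤ 8 * (L + lam) / ψ ^ 2 := by
        apply div_le_div_of_nonneg_right ?_ (by positivity)
        linarith
      linarith
    rw [cutoffLHS, hK] at heq
    have hKey : 2 * L + 2 * lam ≤ (2 * r + 2 * lam) * s := by
      nlinarith [mul_le_mul_of_nonneg_left ha hr.le,
        mul_le_mul_of_nonneg_left hb hr.le,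
        mul_le_mul_of_nonneg_left ha hlam.le,
        mul_le_mul_of_nonneg_left hs1 hlam.le]
    rw [hgdef]
    simp only
    rw [sub_le_iff_le_add, div_le_iff₀ (by positivity)]
    nlinarith
  -- limits
  have hglim : Filter.Tendsto g Filter.atTop (nhds L) := by
    have h1 : Filter.Tendsto (fun ψ : ℝ => 1 + 8 * (L + lam) / ψ ^ 2) Filter.atTop (nhds 1) := by
      have h2 : Filter.Tendsto (fun ψ : ℝ => 8 * (L + lam) / ψ ^ 2) Filter.atTop (nhds 0) := by
        have hp : Filter.Tendsto (fun ψ : ℝ => ψ ^ 2) Filter.atTop Filter.atTop :=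
          Filter.tendsto_pow_atTop (by norm_num)
        have h3 := (hp.inv_tendsto_atTop).const_mul (8 * (L + lam))
        rw [mul_zero] at h3
        simp only [div_eq_mul_inv]
        exact h3
      simpa using (tendsto_const_nhds (x := (1:ℝ))).add h2
    have hsqrt : Filter.Tendsto (fun ψ : ℝ => Real.sqrt (1 + 8 * (L + lam) / ψ ^ 2))
        Filter.atTop (nhds 1) := by
      have := (Real.continuous_sqrt.continuousAt (x := (1:ℝ))).tendsto.comp h1
      rw [Real.sqrt_one] at this
      exact this
    have hdiv : Filter.Tendsto
        (fun ψ : ℝ => (2 * L + 2 * lam) / (2 * Real.sqrt (1 + 8 * (L + lam) / ψ ^ 2)))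
        Filter.atTop (nhds ((2 * L + 2 * lam) / (2 * 1))) :=
      Filter.Tendsto.div tendsto_const_nhds (Filter.Tendsto.const_mul _ hsqrt) (by norm_num)
    have := hdiv.sub_const lam
    have heq : (2 * L + 2 * lam) / (2 * 1) - lam = L := by ring
    rw [heq] at this
    exact this
  exact tendsto_of_tendsto_of_tendsto_of_le_of_le' hglim tendsto_const_nhds
    ((Filter.eventually_gt_atTop 0).mono hlb)
    ((Filter.eventually_gt_atTop 0).mono hub)
end

section
/- Let r₁, λ, ψ, u, c > 0. Let ξ_L := (−1 + √(1+8r₁/ψ²))/2 (the positive root of ξ² + ξ = 2r₁/ψ²) and ξ_R := (−1 − √(1+8(r₁+λ)/ψ²))/2 (the negative root of ξ² + ξ = 2(r₁+λ)/ψ²), and set v_L := u + c − r₁c/(ξ_L ψ²) and v_R := r₁(u+c)/(r₁+λ) − r₁c/(ξ_R ψ²). Then v_L > v_R if and only if r₁·(√(1+8r₁/ψ²) + √(1+8(r₁+λ)/ψ²)) + λ·(√(1+8r₁/ψ²) + 1) < 4λ·(u/c + 1). -/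
/-- With ξ_L the positive root of ξ² + ξ = 2r₁/ψ² and ξ_R the negative root
of ξ² + ξ = 2(r₁+λ)/ψ², and v_L, v_R the boundary values of the agent's value function,
we have v_L > v_R iff
r₁·(√(1+8r₁/ψ²) + √(1+8(r₁+λ)/ψ²)) + λ·(√(1+8r₁/ψ²) + 1) < 4λ·(u/c + 1). -/
theorem vL_gt_vR_iff (r₁ lam ψ u c ξL ξR vL vR : ℝ)
    (hr : 0 < r₁) (hlam : 0 < lam) (hψ : 0 < ψ) (hu : 0 < u) (hc : 0 < c)
    (hξL : ξL = (-1 + Real.sqrt (1 + 8 * r₁ / ψ ^ 2)) / 2)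
    (hξR : ξR = (-1 - Real.sqrt (1 + 8 * (r₁ + lam) / ψ ^ 2)) / 2)
    (hvL : vL = u + c - r₁ * c / (ξL * ψ ^ 2))
    (hvR : vR = r₁ * (u + c) / (r₁ + lam) - r₁ * c / (ξR * ψ ^ 2)) :
    vL > vR ↔
      r₁ * (Real.sqrt (1 + 8 * r₁ / ψ ^ 2) + Real.sqrt (1 + 8 * (r₁ + lam) / ψ ^ 2))
        + lam * (Real.sqrt (1 + 8 * r₁ / ψ ^ 2) + 1) < 4 * lam * (u / c + 1) := by
  set s := Real.sqrt (1 + 8 * r₁ / ψ ^ 2) with hs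
  set t := Real.sqrt (1 + 8 * (r₁ + lam) / ψ ^ 2) with ht
  have hψ2 : (0:ℝ) < ψ ^ 2 := by positivity
  have hs2 : s ^ 2 = 1 + 8 * r₁ / ψ ^ 2 := Real.sq_sqrt (by positivity)
  have ht2 : t ^ 2 = 1 + 8 * (r₁ + lam) / ψ ^ 2 := Real.sq_sqrt (by positivity)
  have hs0 : 0 ≤ s := Real.sqrt_nonneg _
  have ht0 : 0 ≤ t := Real.sqrt_nonneg _
  clear_value s t
  have hs1 : 1 < s := by nlinarith [div_pos (by linarith : (0:ℝ) < 8 * r₁) hψ2]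
  have ht1 : 1 < t := by
    nlinarith [div_pos (by linarith : (0:ℝ) < 8 * (r₁ + lam)) hψ2]
  have hrl : 0 < r₁ + lam := by linarith
  have hs2' : s ^ 2 * ψ ^ 2 = ψ ^ 2 + 8 * r₁ := by
    field_simp at hs2; linarith
  have ht2' : t ^ 2 * ψ ^ 2 = ψ ^ 2 + 8 * (r₁ + lam) := by
    field_simp at ht2; linarith
  have hξLne : ξL * ψ ^ 2 ≠ 0 := by
    have : 0 < ξL := by rw [hξL]; linarith
    positivity
  have hξRne : ξR * ψ ^ 2 ≠ 0 := by
    have h1 : ξR < 0 := by rw [hξR]; nlinarith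
    exact mul_ne_zero (ne_of_lt h1) (ne_of_gt hψ2)
  have hL : r₁ * c / (ξL * ψ ^ 2) = c * (s + 1) / 4 := by
    rw [div_eq_div_iff hξLne (by norm_num), hξL]
    linear_combination (-(c / 2)) * hs2'
  have hR : r₁ * c / (ξR * ψ ^ 2) = -(r₁ * c * (t - 1)) / (4 * (r₁ + lam)) := by
    rw [div_eq_div_iff hξRne (by positivity), hξR]
    linear_combination (-(r₁ * c / 2)) * ht2'
  have hd : (0:ℝ) < 4 * (r₁ + lam) := by linarith
  have key : vL - vR =
      (4 * lam * (u + c) - c * (r₁ * (s + t) + lam * (s + 1))) / (4 * (r₁ + lam)) := by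
    rw [hvL, hvR, hL, hR]
    field_simp
    ring
  have hcu : u / c * c = u := div_mul_cancel₀ u (ne_of_gt hc)
  constructor
  · intro h
    have h1 : 0 < vL - vR := sub_pos.mpr h
    rw [key] at h1
    have h0 : 0 < 4 * lam * (u + c) - c * (r₁ * (s + t) + lam * (s + 1)) := by
      have := mul_pos h1 hd
      rwa [div_mul_cancel₀ _ (ne_of_gt hd)] at this
    rw [show 4 * lam * (u / c + 1) = 4 * lam * (u + c) / c by field_simp,
      lt_div_iff₀ hc]
    linarith [h0, mul_comm c (r₁ * (s + t) + lam * (s + 1))]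
  · intro h
    rw [show 4 * lam * (u / c + 1) = 4 * lam * (u + c) / c by field_simp,
      lt_div_iff₀ hc] at h
    have h0 : 0 < 4 * lam * (u + c) - c * (r₁ * (s + t) + lam * (s + 1)) := by
      linarith [h, mul_comm c (r₁ * (s + t) + lam * (s + 1))]
    have : 0 < vL - vR := by rw [key]; exact div_pos h0 hd
    linarith
end

section
/- Let κ > 0 and u ∈ ℝ, and let z₁ < z₂ be reals. Suppose v : ℝ → ℝ is twice continuously differentiable on (z₁, z₂), v′(z) < 0 for all z ∈ (z₁, z₂), and v(z) = u + κ·(v″(z) − v′(z))/v′(z)² for all z ∈ (z₁, z₂). Then there exist constants C₁ < 0 and C₂ ∈ ℝ such that Φ((v(z) − u)/√κ) = C₁·e^{z} + C₂ for all z ∈ (z₁, z₂). -/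
/-- The standard normal density φ(x) = exp(−x²/2)/√(2π). -/
noncomputable def normPdf (x : ℝ) : ℝ := Real.exp (-(x ^ 2) / 2) / Real.sqrt (2 * Real.pi)

/-- The standard normal CDF Φ(x) = ∫_{−∞}^{x} φ(t) dt. -/
noncomputable def normCdf (x : ℝ) : ℝ := ∫ t in Set.Iic x, normPdf t

lemma normPdf_pos (x : ℝ) : 0 < normPdf x :=
  div_pos (Real.exp_pos _) (Real.sqrt_pos.2 (by positivity))

lemma integrable_normPdf : MeasureTheory.Integrable normPdf := by
  have h : normPdf = fun x => Real.exp (-(1/2 : ℝ) * x ^ 2) * (Real.sqrt (2 * Real.pi))⁻¹ := by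
    funext x; unfold normPdf; rw [div_eq_mul_inv]; congr 2; ring
  rw [h]
  exact (integrable_exp_neg_mul_sq (by norm_num)).mul_const _

lemma continuous_normPdf : Continuous normPdf := by
  unfold normPdf; continuity

lemma hasDerivAt_normCdf (x : ℝ) : HasDerivAt normCdf (normPdf x) x := by
  have heq : ∀ y : ℝ, normCdf y = (∫ t in (0:ℝ)..y, normPdf t) + normCdf 0 := by
    intro y
    have := intervalIntegral.integral_Iic_sub_Iic (μ := MeasureTheory.volume)
      (integrable_normPdf.integrableOn) (integrable_normPdf.integrableOn) (a := 0) (b := y)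
    simp only [normCdf]
    linarith [this]
  have h : HasDerivAt (fun y => (∫ t in (0:ℝ)..y, normPdf t) + normCdf 0) (normPdf x) x := by
    exact (intervalIntegral.integral_hasDerivAt_right
      (integrable_normPdf.intervalIntegrable)
      (continuous_normPdf.stronglyMeasurableAtFilter _ _)
      continuous_normPdf.continuousAt).add_const _
  exact h.congr_deriv rfl |>.congr_of_eventuallyEq (Filter.Eventually.of_forall heq)

lemma const_on_Ioo {a b : ℝ} {f : ℝ → ℝ}
    (hf : ∀ x ∈ Set.Ioo a b, HasDerivAt f 0 x) {x y : ℝ}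
    (hx : x ∈ Set.Ioo a b) (hy : y ∈ Set.Ioo a b) : f x = f y := by
  refine (convex_Ioo a b).is_const_of_fderivWithin_eq_zero
    (fun z hz => (hf z hz).differentiableAt.differentiableWithinAt) (fun z hz => ?_) hx hy
  rw [fderivWithin_of_isOpen isOpen_Ioo hz, (hf z hz).hasFDerivAt.fderiv]
  ext; simp

lemma hasDerivAt_normPdf (x : ℝ) : HasDerivAt normPdf (-x * normPdf x) x := by
  have h1 : HasDerivAt (fun t : ℝ => -(t ^ 2) / 2) (-x) x := by
    have := ((hasDerivAt_pow 2 x).neg).div_const 2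
    refine this.congr_deriv ?_
    ring
  have h2 := (Real.hasDerivAt_exp (-(x ^ 2) / 2)).comp x h1
  have h3 := h2.div_const (Real.sqrt (2 * Real.pi))
  have : HasDerivAt (fun t : ℝ => Real.exp (-(t ^ 2) / 2) / Real.sqrt (2 * Real.pi))
      (Real.exp (-(x ^ 2) / 2) * (-x) / Real.sqrt (2 * Real.pi)) x := h3
  unfold normPdf
  convert this using 1
  ring


/-- If v is C² on (z₁,z₂), strictly decreasing (v′ < 0), and solves the
nonlinear ODE v = u + κ·(v″ − v′)/v′², then there are constants C₁ < 0 and C₂ with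
Φ((v(z) − u)/√κ) = C₁·e^z + C₂ on (z₁,z₂). -/
theorem hjb_mixing_solution (κ u z₁ z₂ : ℝ) (hκ : 0 < κ) (hz : z₁ < z₂)
    (v : ℝ → ℝ) (hv : ContDiffOn ℝ 2 v (Set.Ioo z₁ z₂))
    (hv' : ∀ z ∈ Set.Ioo z₁ z₂, deriv v z < 0)
    (hode : ∀ z ∈ Set.Ioo z₁ z₂,
      v z = u + κ * (deriv (deriv v) z - deriv v z) / (deriv v z) ^ 2) :
    ∃ C₁ C₂ : ℝ, C₁ < 0 ∧ ∀ z ∈ Set.Ioo z₁ z₂,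
      normCdf ((v z - u) / Real.sqrt κ) = C₁ * Real.exp z + C₂ := by
  have hso : IsOpen (Set.Ioo z₁ z₂) := isOpen_Ioo
  have hκ' : (0:ℝ) < Real.sqrt κ := Real.sqrt_pos.2 hκ
  have hsq : Real.sqrt κ * Real.sqrt κ = κ := Real.mul_self_sqrt hκ.le
  have hvd : ∀ z ∈ Set.Ioo z₁ z₂, HasDerivAt v (deriv v z) z := fun z hz =>
    ((hv.differentiableOn (by norm_num)).differentiableAt (hso.mem_nhds hz)).hasDerivAt
  have hv1 : ContDiffOn ℝ 1 (deriv v) (Set.Ioo z₁ z₂) := hv.deriv_of_isOpen hso (by norm_num)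
  have hvd2 : ∀ z ∈ Set.Ioo z₁ z₂, HasDerivAt (deriv v) (deriv (deriv v) z) z := fun z hz =>
    ((hv1.differentiableOn (by norm_num)).differentiableAt (hso.mem_nhds hz)).hasDerivAt
  set w : ℝ → ℝ := fun z => (v z - u) / Real.sqrt κ with hw
  set h : ℝ → ℝ := fun z => normCdf (w z) with hh
  set H : ℝ → ℝ := fun z => normPdf (w z) * deriv v z / Real.sqrt κ with hH
  have hwd : ∀ z ∈ Set.Ioo z₁ z₂, HasDerivAt w (deriv v z / Real.sqrt κ) z := fun z hz =>
    ((hvd z hz).sub_const u).div_const _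
  have hhd : ∀ z ∈ Set.Ioo z₁ z₂, HasDerivAt h (H z) z := by
    intro z hz
    have := (hasDerivAt_normCdf (w z)).comp z (hwd z hz)
    refine this.congr_deriv ?_
    simp [hH, mul_div_assoc]
  have hHd : ∀ z ∈ Set.Ioo z₁ z₂, HasDerivAt H (H z) z := by
    intro z hz
    have ha : deriv v z ≠ 0 := (hv' z hz).ne
    have hode' : (v z - u) * (deriv v z) ^ 2
        = Real.sqrt κ * Real.sqrt κ * (deriv (deriv v) z - deriv v z) := by
      have h0 := hode z hz
      have h1 : v z - u = κ * (deriv (deriv v) z - deriv v z) / (deriv v z) ^ 2 := by linarith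
      rw [h1, div_mul_cancel₀ _ (pow_ne_zero 2 ha), hsq]
    have h1 : HasDerivAt (fun t => normPdf (w t))
        (-(w z) * normPdf (w z) * (deriv v z / Real.sqrt κ)) z :=
      (hasDerivAt_normPdf (w z)).comp z (hwd z hz)
    have h2 : HasDerivAt H
        ((-(w z) * normPdf (w z) * (deriv v z / Real.sqrt κ) * deriv v z
          + normPdf (w z) * deriv (deriv v) z) / Real.sqrt κ) z :=
      (h1.mul (hvd2 z hz)).div_const _
    convert h2 using 1
    simp only [hH, hw]
    have hc : Real.sqrt κ ≠ 0 := hκ'.ne'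
    have h3 : (v z - u) / Real.sqrt κ * (deriv v z / Real.sqrt κ) * deriv v z
        = deriv (deriv v) z - deriv v z := by
      have e : (v z - u) / Real.sqrt κ * (deriv v z / Real.sqrt κ) * deriv v z
          = (v z - u) * deriv v z ^ 2 / (Real.sqrt κ * Real.sqrt κ) := by ring
      rw [e, hode', mul_div_cancel_left₀ _ (mul_ne_zero hc hc)]
    linear_combination (normPdf ((v z - u) / Real.sqrt κ) / Real.sqrt κ) * h3
  have hgd : ∀ z ∈ Set.Ioo z₁ z₂, HasDerivAt (fun t => H t * Real.exp (-t)) 0 z := by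
    intro z hz
    have he : HasDerivAt (fun t : ℝ => Real.exp (-t)) (-Real.exp (-z)) z := by
      have := (Real.hasDerivAt_exp (-z)).comp z (hasDerivAt_neg z)
      refine this.congr_deriv ?_
      ring
    have := (hHd z hz).mul he
    refine this.congr_deriv ?_
    ring
  set z₀ : ℝ := (z₁ + z₂) / 2 with hz₀def
  have hz₀ : z₀ ∈ Set.Ioo z₁ z₂ := ⟨by simp only [hz₀def]; linarith, by simp only [hz₀def]; linarith⟩
  set C₁ : ℝ := H z₀ * Real.exp (-z₀) with hC₁def
  have hC₁neg : C₁ < 0 := by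
    have hH0 : H z₀ < 0 := div_neg_of_neg_of_pos
      (mul_neg_of_pos_of_neg (normPdf_pos _) (hv' z₀ hz₀)) hκ'
    exact mul_neg_of_neg_of_pos hH0 (Real.exp_pos _)
  have hC₁ : ∀ z ∈ Set.Ioo z₁ z₂, H z = C₁ * Real.exp z := by
    intro z hz
    have h4 : H z * Real.exp (-z) = C₁ := by
      rw [hC₁def]; exact const_on_Ioo hgd hz hz₀
    calc H z = H z * Real.exp (-z) * Real.exp z := by
          rw [mul_assoc, ← Real.exp_add, neg_add_cancel, Real.exp_zero, mul_one]
      _ = C₁ * Real.exp z := by rw [h4]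
  have hFd : ∀ z ∈ Set.Ioo z₁ z₂, HasDerivAt (fun t => h t - C₁ * Real.exp t) 0 z := by
    intro z hz
    have := (hhd z hz).sub ((Real.hasDerivAt_exp z).const_mul C₁)
    have h0 : H z - C₁ * Real.exp z = 0 := by rw [hC₁ z hz]; ring
    rwa [h0] at this
  refine ⟨C₁, h z₀ - C₁ * Real.exp z₀, hC₁neg, fun z hz => ?_⟩
  have h5 : h z - C₁ * Real.exp z = h z₀ - C₁ * Real.exp z₀ := const_on_Ioo hFd hz hz₀
  have h6 : h z = C₁ * Real.exp z + (h z₀ - C₁ * Real.exp z₀) := by linarith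
  simpa [hh, hw] using h6
end

section
/- Let z₁ < z₂ be reals, let g : (z₁, z₂) → ℝ be continuous and strictly decreasing, and let a : (z₁, z₂) → ℝ be differentiable with a′(z) = 1 − a(z) − g(z) for all z ∈ (z₁, z₂). Then one of the following holds: (i) a is strictly increasing on (z₁, z₂); (ii) a is strictly decreasing on (z₁, z₂); or (iii) there exists z̃ ∈ (z₁, z₂) such that a is strictly decreasing on (z₁, z̃] and strictly increasing on [z̃, z₂). -/
open Set intervalIntegral

-- key lemma: f(x) ≥ 0, x < y in Ioo ⇒ f(y) > 0 where f z = 1 - a z - g z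
lemma key_shape (z₁ z₂ : ℝ) (g a : ℝ → ℝ)
    (hg_cont : ContinuousOn g (Set.Ioo z₁ z₂))
    (hg_anti : StrictAntiOn g (Set.Ioo z₁ z₂))
    (ha : ∀ z ∈ Set.Ioo z₁ z₂, HasDerivAt a (1 - a z - g z) z)
    {x y : ℝ} (hx : x ∈ Set.Ioo z₁ z₂) (hy : y ∈ Set.Ioo z₁ z₂) (hxy : x < y)
    (hfx : 0 ≤ 1 - a x - g x) : 0 < 1 - a y - g y := by
  set b : ℝ → ℝ := fun t => Real.exp t * (a t - 1) with hb
  have hIcc : Set.Icc x y ⊆ Set.Ioo z₁ z₂ := fun t ht =>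
    ⟨lt_of_lt_of_le hx.1 ht.1, lt_of_le_of_lt ht.2 hy.2⟩
  have hbderiv : ∀ t ∈ Set.uIcc x y, HasDerivAt b (-(Real.exp t * g t)) t := by
    intro t ht
    rw [Set.uIcc_of_le hxy.le] at ht
    have h1 := (Real.hasDerivAt_exp t).mul ((ha t (hIcc ht)).sub_const 1)
    have h2 : HasDerivAt b (Real.exp t * (a t - 1) + Real.exp t * (1 - a t - g t)) t := h1
    exact h2.congr_deriv (by ring)
  have hgi : IntervalIntegrable (fun t => -(Real.exp t * g t)) MeasureTheory.volume x y := by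
    apply ContinuousOn.intervalIntegrable
    rw [Set.uIcc_of_le hxy.le]
    exact ((Real.continuous_exp.continuousOn.mul (hg_cont.mono hIcc))).neg
  have hftc : ∫ t in x..y, -(Real.exp t * g t) = b y - b x :=
    integral_eq_sub_of_hasDerivAt hbderiv hgi
  have hc2 : ∀ t ∈ Set.uIcc x y, HasDerivAt (fun t => -(Real.exp t * g y)) (-(Real.exp t * g y)) t := by
    intro t _
    have h := ((Real.hasDerivAt_exp t).mul_const (g y)).neg
    exact h
  have hgi2 : IntervalIntegrable (fun t => -(Real.exp t * g y)) MeasureTheory.volume x y :=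
    (Continuous.intervalIntegrable (by continuity) x y)
  have hftc2 : ∫ t in x..y, -(Real.exp t * g y) = -(Real.exp y * g y) - -(Real.exp x * g y) :=
    integral_eq_sub_of_hasDerivAt hc2 hgi2
  have hmono : (∫ t in x..y, -(Real.exp t * g t)) ≤ ∫ t in x..y, -(Real.exp t * g y) := by
    apply integral_mono_on hxy.le hgi hgi2
    intro t ht
    have htI := hIcc ht
    have : g y ≤ g t := by
      rcases eq_or_lt_of_le ht.2 with h | h
      · rw [h]
      · exact (hg_anti htI hy h).le
    nlinarith [Real.exp_pos t]
  have hbx : b x ≤ -(Real.exp x * g x) := by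
    have := Real.exp_pos x
    simp only [hb]
    nlinarith
  have hby : b y < -(Real.exp y * g y) := by
    have h1 : b y - b x ≤ -(Real.exp y * g y) + Real.exp x * g y := by
      rw [← hftc]; linarith [hmono, hftc2]
    have hgy : g y < g x := hg_anti hx hy hxy
    have := Real.exp_pos x
    nlinarith
  have := Real.exp_pos y
  simp only [hb] at hby
  nlinarith

/-- If g is continuous and strictly decreasing on (z₁,z₂) and a satisfies
a′(z) = 1 − a(z) − g(z) there, then a is strictly increasing, strictly decreasing, or
first strictly decreasing then strictly increasing on (z₁,z₂). -/
theorem shape_of_policy (z₁ z₂ : ℝ) (hz : z₁ < z₂) (g a : ℝ → ℝ)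
    (hg_cont : ContinuousOn g (Set.Ioo z₁ z₂))
    (hg_anti : StrictAntiOn g (Set.Ioo z₁ z₂))
    (ha : ∀ z ∈ Set.Ioo z₁ z₂, HasDerivAt a (1 - a z - g z) z) :
    StrictMonoOn a (Set.Ioo z₁ z₂) ∨ StrictAntiOn a (Set.Ioo z₁ z₂) ∨
      ∃ zt ∈ Set.Ioo z₁ z₂,
        StrictAntiOn a (Set.Ioc z₁ zt) ∧ StrictMonoOn a (Set.Ico zt z₂) := by
  set f : ℝ → ℝ := fun z => 1 - a z - g z with hf
  have key : ∀ {x y : ℝ}, x ∈ Set.Ioo z₁ z₂ → y ∈ Set.Ioo z₁ z₂ → x < y →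
      0 ≤ f x → 0 < f y := fun hx hy hxy h =>
    key_shape z₁ z₂ g a hg_cont hg_anti ha hx hy hxy h
  have hcont : ∀ s ⊆ Set.Ioo z₁ z₂, ContinuousOn a s := fun s hs z hz' =>
    (ha z (hs hz')).continuousAt.continuousWithinAt
  have hderiv : ∀ z ∈ Set.Ioo z₁ z₂, deriv a z = f z := fun z hz' => (ha z hz').deriv
  set S := {z ∈ Set.Ioo z₁ z₂ | 0 ≤ f z} with hS
  by_cases hSne : S.Nonempty
  · obtain ⟨p, hp⟩ := hSne
    have hbdd : BddBelow S := ⟨z₁, fun s hs => hs.1.1.le⟩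
    set zt := sInf S with hzt
    have hztp : zt ≤ p := csInf_le hbdd hp
    have hposafter : ∀ z ∈ Set.Ioo z₁ z₂, zt < z → 0 < f z := by
      intro z hzI hzz
      obtain ⟨s, hsS, hs⟩ := exists_lt_of_csInf_lt ⟨p, hp⟩ hzz
      exact key hsS.1 hzI hs hsS.2
    rcases lt_or_ge z₁ zt with hcase | hcase
    · -- third disjunct
      right; right
      have hztI : zt ∈ Set.Ioo z₁ z₂ := ⟨hcase, lt_of_le_of_lt hztp hp.1.2⟩
      refine ⟨zt, hztI, ?_, ?_⟩
      · apply strictAntiOn_of_deriv_neg (convex_Ioc z₁ zt)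
        · exact hcont _ (fun t ht => ⟨ht.1, lt_of_le_of_lt ht.2 hztI.2⟩)
        · intro t ht
          rw [interior_Ioc] at ht
          have htI : t ∈ Set.Ioo z₁ z₂ := ⟨ht.1, ht.2.trans hztI.2⟩
          rw [hderiv t htI]
          by_contra hneg
          push_neg at hneg
          have : t ∈ S := ⟨htI, hneg⟩
          exact absurd (csInf_le hbdd this) (not_le.mpr ht.2)
      · apply strictMonoOn_of_deriv_pos (convex_Ico zt z₂)
        · exact hcont _ (fun t ht => ⟨lt_of_lt_of_le hztI.1 ht.1, ht.2⟩)
        · intro t ht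
          rw [interior_Ico] at ht
          have htI : t ∈ Set.Ioo z₁ z₂ := ⟨hztI.1.trans ht.1, ht.2⟩
          rw [hderiv t htI]
          exact hposafter t htI ht.1
    · -- zt ≤ z₁ : strictly increasing
      left
      apply strictMonoOn_of_deriv_pos (convex_Ioo z₁ z₂) (hcont _ le_rfl)
      intro t ht
      rw [interior_Ioo] at ht
      rw [hderiv t ht]
      exact hposafter t ht (lt_of_le_of_lt hcase ht.1)
  · -- S empty : f < 0 everywhere, strictly decreasing
    right; left
    apply strictAntiOn_of_deriv_neg (convex_Ioo z₁ z₂) (hcont _ le_rfl)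
    intro t ht
    rw [interior_Ioo] at ht
    rw [hderiv t ht]
    by_contra hneg
    push_neg at hneg
    exact hSne ⟨t, ht, hneg⟩
end

section
/- Let r₁, λ, ψ, u, c > 0. Let ξ_R := (−1 − √(1+8(r₁+λ)/ψ²))/2, v_R := r₁(u+c)/(r₁+λ) − r₁c/(ξ_R ψ²), κ_R := r₁²c²/(2(r₁+λ)ψ²), ξ_L := (−1 + √(1+8r₁/ψ²))/2, and v_L := u + c − r₁c/(ξ_L ψ²). Define, for x ∈ [v_R, v_L], a₊*(x) := 1 − [(√(2(r₁+λ))/ψ)·φ((x − r₁u/(r₁+λ))/√κ_R)] / [(√(2(r₁+λ))/ψ)·φ((v_R − r₁u/(r₁+λ))/√κ_R) + Φ((v_R − r₁u/(r₁+λ))/√κ_R) − Φ((x − r₁u/(r₁+λ))/√κ_R)]. If v_R < v_L, then the denominator in this definition is strictly positive for every x ∈ [v_R, v_L], a₊* is strictly increasing on [v_R, v_L], a₊*(v_R) = 0, and 0 < a₊*(v_L) < 1. -/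
lemma normPdf_anti {x y : ℝ} (hx : 0 ≤ x) (hxy : x < y) : normPdf y < normPdf x := by
  unfold normPdf
  have h : -(y ^ 2) / 2 < -(x ^ 2) / 2 := by nlinarith
  exact div_lt_div_of_pos_right (Real.exp_lt_exp.2 h) (Real.sqrt_pos.2 (by positivity))

lemma normCdf_sub {a b : ℝ} : normCdf b - normCdf a = ∫ t in a..b, normPdf t := by
  unfold normCdf
  exact intervalIntegral.integral_Iic_sub_Iic integrable_normPdf.integrableOn
    integrable_normPdf.integrableOn

lemma hasDerivAt_neg_normPdf (t : ℝ) :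
    HasDerivAt (fun s => -normPdf s) (t * normPdf t) t := by
  have h1 : HasDerivAt (fun s : ℝ => -(s ^ 2) / 2) (-t) t := by
    have := (hasDerivAt_pow 2 t).neg.div_const 2
    exact this.congr_deriv (by ring)
  have h2 := (h1.exp.div_const (Real.sqrt (2 * Real.pi))).neg
  exact h2.congr_deriv (by unfold normPdf; ring)

lemma integral_id_mul_normPdf (a b : ℝ) :
    ∫ t in a..b, t * normPdf t = normPdf a - normPdf b := by
  have h := intervalIntegral.integral_eq_sub_of_hasDerivAt
    (f := fun s => -normPdf s) (f' := fun t => t * normPdf t)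
    (fun t _ => hasDerivAt_neg_normPdf t)
    ((continuous_id.mul continuous_normPdf).intervalIntegrable a b)
  have h' : (∫ t in a..b, t * normPdf t) = -normPdf b + normPdf a := by simpa using h
  linarith

lemma mills {a b : ℝ} (ha : 0 < a) (hab : a ≤ b) :
    normCdf b - normCdf a ≤ (normPdf a - normPdf b) / a := by
  rw [normCdf_sub]
  have h2 : (∫ t in a..b, normPdf t) ≤ ∫ t in a..b, a⁻¹ * (t * normPdf t) := by
    apply intervalIntegral.integral_mono_on hab
      (continuous_normPdf.intervalIntegrable a b)
      ((continuous_const.mul (continuous_id.mul continuous_normPdf)).intervalIntegrable a b)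
    intro t ht
    have h1 : 1 ≤ a⁻¹ * t := by
      rw [inv_mul_eq_div, le_div_iff₀ ha]; linarith [ht.1]
    show normPdf t ≤ a⁻¹ * (t * normPdf t)
    nlinarith [normPdf_pos t]
  rw [intervalIntegral.integral_const_mul, integral_id_mul_normPdf] at h2
  rw [div_eq_inv_mul]; exact h2

lemma abstract_main (A m s vR vL : ℝ) (hA : 0 < A) (hs : 0 < s)
    (ha : 0 < (vR - m) / s) (hAa : 1 < A * ((vR - m) / s)) (hvRL : vR < vL)
    (aplus : ℝ → ℝ)
    (haplus : ∀ x, aplus x = 1 - A * normPdf ((x - m) / s) /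
      (A * normPdf ((vR - m) / s) + normCdf ((vR - m) / s) - normCdf ((x - m) / s))) :
    (∀ x ∈ Set.Icc vR vL, 0 < A * normPdf ((vR - m) / s) + normCdf ((vR - m) / s)
        - normCdf ((x - m) / s)) ∧
    StrictMonoOn aplus (Set.Icc vR vL) ∧ aplus vR = 0 ∧ 0 < aplus vL ∧ aplus vL < 1 := by
  have key : ∀ x ∈ Set.Icc vR vL, normPdf ((x - m) / s) / ((vR - m) / s) <
      A * normPdf ((vR - m) / s) + normCdf ((vR - m) / s) - normCdf ((x - m) / s) := by
    intro x hx
    have hax : (vR - m) / s ≤ (x - m) / s :=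
      (div_le_div_iff_of_pos_right hs).2 (by linarith [hx.1])
    have hmills := mills ha hax
    have hm2 : (normCdf ((x - m) / s) - normCdf ((vR - m) / s)) * ((vR - m) / s) ≤
        normPdf ((vR - m) / s) - normPdf ((x - m) / s) := (le_div_iff₀ ha).1 hmills
    have hpa := normPdf_pos ((vR - m) / s)
    have hprod : normPdf ((vR - m) / s) < A * ((vR - m) / s) * normPdf ((vR - m) / s) := by
      nlinarith
    rw [div_lt_iff₀ ha]
    nlinarith [hm2, hprod]
  have Dpos : ∀ x ∈ Set.Icc vR vL, 0 < A * normPdf ((vR - m) / s) + normCdf ((vR - m) / s)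
      - normCdf ((x - m) / s) := by
    intro x hx
    have h1 := key x hx
    have h2 := div_pos (normPdf_pos ((x - m) / s)) ha
    linarith
  have hmemR : vR ∈ Set.Icc vR vL := ⟨le_refl _, hvRL.le⟩
  have hmemL : vL ∈ Set.Icc vR vL := ⟨hvRL.le, le_refl _⟩
  have hmono : StrictMonoOn aplus (Set.Icc vR vL) := by
    intro x hx y hy hxy
    have hax : (vR - m) / s ≤ (x - m) / s := (div_le_div_iff_of_pos_right hs).2 (by linarith [hx.1])
    have hzxy : (x - m) / s < (y - m) / s := (div_lt_div_iff_of_pos_right hs).2 (by linarith)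
    have hzx0 : 0 < (x - m) / s := lt_of_lt_of_le ha hax
    have hphi : normPdf ((y - m) / s) < normPdf ((x - m) / s) := normPdf_anti hzx0.le hzxy
    have hm1 := mills hzx0 hzxy.le
    have hstep : (normPdf ((x - m) / s) - normPdf ((y - m) / s)) / ((x - m) / s) ≤
        (normPdf ((x - m) / s) - normPdf ((y - m) / s)) / ((vR - m) / s) :=
      div_le_div_of_nonneg_left (by linarith) ha hax
    have hm2a : (normCdf ((y - m) / s) - normCdf ((x - m) / s)) * ((vR - m) / s) ≤
        normPdf ((x - m) / s) - normPdf ((y - m) / s) :=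
      (le_div_iff₀ ha).1 (hm1.trans hstep)
    have hDx := key x hx
    have hDxpos := Dpos x hx
    have hDypos := Dpos y hy
    have hDx' : normPdf ((x - m) / s) <
        (A * normPdf ((vR - m) / s) + normCdf ((vR - m) / s) - normCdf ((x - m) / s))
        * ((vR - m) / s) := (div_lt_iff₀ ha).1 hDx
    have h1 := mul_lt_mul_of_pos_left hDx' (sub_pos.2 hphi)
    have h2 := mul_le_mul_of_nonneg_left hm2a (normPdf_pos ((x - m) / s)).le
    have h3 : normPdf ((y - m) / s) *
        (A * normPdf ((vR - m) / s) + normCdf ((vR - m) / s) - normCdf ((x - m) / s)) <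
        normPdf ((x - m) / s) *
        (A * normPdf ((vR - m) / s) + normCdf ((vR - m) / s) - normCdf ((y - m) / s)) := by
      nlinarith [h1, h2, ha]
    rw [haplus x, haplus y]
    have h4 : A * normPdf ((y - m) / s) /
        (A * normPdf ((vR - m) / s) + normCdf ((vR - m) / s) - normCdf ((y - m) / s)) <
        A * normPdf ((x - m) / s) /
        (A * normPdf ((vR - m) / s) + normCdf ((vR - m) / s) - normCdf ((x - m) / s)) := by
      rw [div_lt_div_iff₀ hDypos hDxpos]
      nlinarith [mul_lt_mul_of_pos_left h3 hA]
    linarith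
  have hvR0 : aplus vR = 0 := by
    have hne : A * normPdf ((vR - m) / s) ≠ 0 := (mul_pos hA (normPdf_pos _)).ne'
    rw [haplus, add_sub_cancel_right, div_self hne, sub_self]
  refine ⟨Dpos, hmono, hvR0, ?_, ?_⟩
  · have := hmono hmemR hmemL hvRL
    linarith [hvR0 ▸ this]
  · rw [haplus]
    have := div_pos (mul_pos hA (normPdf_pos ((vL - m) / s))) (Dpos vL hmemL)
    linarith

/-- Properties of the function a₊* on [v_R, v_L]: the denominator is
strictly positive, a₊* is strictly increasing, a₊*(v_R) = 0, and 0 < a₊*(v_L) < 1. -/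
theorem aplus_properties (r₁ lam ψ u c ξR vR κR ξL vL : ℝ)
    (hr : 0 < r₁) (hlam : 0 < lam) (hψ : 0 < ψ) (hu : 0 < u) (hc : 0 < c)
    (hξR : ξR = (-1 - Real.sqrt (1 + 8 * (r₁ + lam) / ψ ^ 2)) / 2)
    (hvR : vR = r₁ * (u + c) / (r₁ + lam) - r₁ * c / (ξR * ψ ^ 2))
    (hκR : κR = r₁ ^ 2 * c ^ 2 / (2 * (r₁ + lam) * ψ ^ 2))
    (hξL : ξL = (-1 + Real.sqrt (1 + 8 * r₁ / ψ ^ 2)) / 2)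
    (hvL : vL = u + c - r₁ * c / (ξL * ψ ^ 2))
    (aplus : ℝ → ℝ)
    (haplus : ∀ x, aplus x = 1 -
      ((Real.sqrt (2 * (r₁ + lam)) / ψ) * normPdf ((x - r₁ * u / (r₁ + lam)) / Real.sqrt κR)) /
        ((Real.sqrt (2 * (r₁ + lam)) / ψ) * normPdf ((vR - r₁ * u / (r₁ + lam)) / Real.sqrt κR)
          + normCdf ((vR - r₁ * u / (r₁ + lam)) / Real.sqrt κR)
          - normCdf ((x - r₁ * u / (r₁ + lam)) / Real.sqrt κR)))
    (hvRL : vR < vL) :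
    (∀ x ∈ Set.Icc vR vL,
      0 < (Real.sqrt (2 * (r₁ + lam)) / ψ) * normPdf ((vR - r₁ * u / (r₁ + lam)) / Real.sqrt κR)
          + normCdf ((vR - r₁ * u / (r₁ + lam)) / Real.sqrt κR)
          - normCdf ((x - r₁ * u / (r₁ + lam)) / Real.sqrt κR)) ∧
    StrictMonoOn aplus (Set.Icc vR vL) ∧
    aplus vR = 0 ∧ 0 < aplus vL ∧ aplus vL < 1 := by
  have hP : 0 < r₁ + lam := by linarith
  set S := Real.sqrt (2 * (r₁ + lam)) with hS_def
  have hS : 0 < S := Real.sqrt_pos.2 (by positivity)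
  have hS2 : S ^ 2 = 2 * (r₁ + lam) := Real.sq_sqrt (by positivity)
  have hsq : Real.sqrt κR = r₁ * c / (S * ψ) := by
    have h1 : (S * ψ) ^ 2 = 2 * (r₁ + lam) * ψ ^ 2 := by rw [mul_pow, hS2]
    have hk : κR = (r₁ * c / (S * ψ)) ^ 2 := by rw [hκR, div_pow, h1]; ring
    rw [hk, Real.sqrt_sq (by positivity)]
  have hsqpos : 0 < Real.sqrt κR := by rw [hsq]; positivity
  have ht : Real.sqrt (1 + 8 * (r₁ + lam) / ψ ^ 2) ^ 2 = 1 + 8 * (r₁ + lam) / ψ ^ 2 :=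
    Real.sq_sqrt (by positivity)
  have hξneg : ξR < 0 := by
    have := Real.sqrt_nonneg (1 + 8 * (r₁ + lam) / ψ ^ 2)
    rw [hξR]; linarith
  have hξeq : ξR ^ 2 + ξR = 2 * (r₁ + lam) / ψ ^ 2 := by
    rw [hξR]
    linear_combination ht / 4
  have hvm : vR - r₁ * u / (r₁ + lam) = r₁ * c / (r₁ + lam) - r₁ * c / (ξR * ψ ^ 2) := by
    rw [hvR]; ring
  have hvm_pos : 0 < vR - r₁ * u / (r₁ + lam) := by
    rw [hvm]
    have h1 : r₁ * c / (ξR * ψ ^ 2) < 0 :=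
      div_neg_of_pos_of_neg (by positivity) (mul_neg_of_neg_of_pos hξneg (by positivity))
    have h2 : 0 < r₁ * c / (r₁ + lam) := by positivity
    linarith
  have ha : 0 < (vR - r₁ * u / (r₁ + lam)) / Real.sqrt κR := div_pos hvm_pos hsqpos
  have hAa : 1 < (S / ψ) * ((vR - r₁ * u / (r₁ + lam)) / Real.sqrt κR) := by
    have hexp : (S / ψ) * ((vR - r₁ * u / (r₁ + lam)) / Real.sqrt κR) = 1 - ξR := by
      have hξne : ξR ≠ 0 := ne_of_lt hξneg
      have hξeq2 : (ξR ^ 2 + ξR) * ψ ^ 2 = 2 * (r₁ + lam) := by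
        rw [hξeq, div_mul_cancel₀ _ (pow_ne_zero 2 hψ.ne')]
      rw [hsq, hvm]
      field_simp
      linear_combination (ψ ^ 2 * ξR - (r₁ + lam)) * hS2 + (r₁ + lam) * hξeq2
    rw [hexp]; linarith
  exact abstract_main (S / ψ) (r₁ * u / (r₁ + lam)) (Real.sqrt κR) vR vL
    (div_pos hS hψ) hsqpos ha hAa hvRL aplus haplus
end

section
/- Let r₁, λ, ψ, u, c > 0, and define ξ_L, ξ_R, v_L, v_R, κ_L, κ_R and the functions a₋*, a₊* on [v_R, v_L] as follows: ξ_L := (−1 + √(1+8r₁/ψ²))/2, ξ_R := (−1 − √(1+8(r₁+λ)/ψ²))/2, v_L := u + c − r₁c/(ξ_L ψ²), v_R := r₁(u+c)/(r₁+λ) − r₁c/(ξ_R ψ²), κ_L := r₁c²/(2ψ²), κ_R := r₁²c²/(2(r₁+λ)ψ²), a₋*(x) := 1 − [(√(2r₁)/ψ)·φ((x−u)/√κ_L)] / [(√(2r₁)/ψ)·φ((v_L−u)/√κ_L) + Φ((v_L−u)/√κ_L) − Φ((x−u)/√κ_L)], and a₊*(x) := 1 − [(√(2(r₁+λ))/ψ)·φ((x−r₁u/(r₁+λ))/√κ_R)]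 / [(√(2(r₁+λ))/ψ)·φ((v_R−r₁u/(r₁+λ))/√κ_R) + Φ((v_R−r₁u/(r₁+λ))/√κ_R) − Φ((x−r₁u/(r₁+λ))/√κ_R)]. If v_R < v_L, then there exists a unique v* ∈ (v_R, v_L) such that a₋*(v*) = a₊*(v*). -/
lemma continuous_normCdf : Continuous normCdf := by
  have : Differentiable ℝ normCdf := fun x => (hasDerivAt_normCdf x).differentiableAt
  exact this.continuous

lemma strictMono_normCdf : StrictMono normCdf :=
  strictMono_of_deriv_pos (fun x => by
    rw [(hasDerivAt_normCdf x).deriv]; exact normPdf_pos x)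
noncomputable def Dfun (k b y : ℝ) : ℝ := k * normPdf b + normCdf b - normCdf y

noncomputable def gfun (k b y : ℝ) : ℝ := k * normPdf y / Dfun k b y

lemma hasDerivAt_Dfun (k b y : ℝ) : HasDerivAt (Dfun k b) (-normPdf y) y :=
  (hasDerivAt_normCdf y).const_sub (k * normPdf b + normCdf b)

lemma continuous_Dfun (k b : ℝ) : Continuous (Dfun k b) :=
  continuous_const.sub continuous_normCdf

lemma hasDerivAt_q (k b y : ℝ) :
    HasDerivAt (fun y => Dfun k b y - k * normPdf y) (normPdf y * (k * y - 1)) y := by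
  have h := (hasDerivAt_Dfun k b y).sub ((hasDerivAt_normPdf y).const_mul k)
  refine h.congr_deriv ?_
  ring

lemma hasDerivAt_h (k b y : ℝ) :
    HasDerivAt (fun y => normPdf y - y * Dfun k b y) (-Dfun k b y) y := by
  have h := (hasDerivAt_normPdf y).sub ((hasDerivAt_id y).mul (hasDerivAt_Dfun k b y))
  refine h.congr_deriv ?_
  simp only [id_eq]
  ring

lemma Dfun_self (k b : ℝ) : Dfun k b b = k * normPdf b := by
  unfold Dfun; ring

section Left

variable {k b : ℝ} (hk : 0 < k) (hkb : k * b < 1)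
include hk hkb

lemma left_q_anti : StrictAntiOn (fun y => Dfun k b y - k * normPdf y) (Set.Iic b) := by
  apply strictAntiOn_of_deriv_neg (convex_Iic b)
  · exact ((continuous_Dfun k b).sub (continuous_const.mul continuous_normPdf)).continuousOn
  · intro y hy
    rw [interior_Iic] at hy
    rw [(hasDerivAt_q k b y).deriv]
    have h1 : k * y < 1 := by nlinarith [Set.mem_Iio.mp hy]
    nlinarith [normPdf_pos y]

lemma left_q_pos {y : ℝ} (hy : y < b) : 0 < Dfun k b y - k * normPdf y := by
  have := left_q_anti hk hkb (Set.mem_Iic.mpr hy.le) (Set.mem_Iic.mpr le_rfl) hy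
  simpa [Dfun_self] using this

lemma left_D_pos {y : ℝ} (hy : y ≤ b) : 0 < Dfun k b y := by
  rcases eq_or_lt_of_le hy with rfl | hy'
  · rw [Dfun_self]; exact mul_pos hk (normPdf_pos _)
  · have := left_q_pos hk hkb hy'
    nlinarith [mul_pos hk (normPdf_pos y)]

lemma left_h_pos {y : ℝ} (hy : y ≤ b) : 0 < normPdf y - y * Dfun k b y := by
  have hb : 0 < normPdf b - b * Dfun k b b := by
    rw [Dfun_self]
    nlinarith [normPdf_pos b]
  rcases eq_or_lt_of_le hy with rfl | hy'
  · exact hb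
  · have hanti : StrictAntiOn (fun y => normPdf y - y * Dfun k b y) (Set.Iic b) := by
      apply strictAntiOn_of_deriv_neg (convex_Iic b)
      · exact (continuous_normPdf.sub (continuous_id.mul (continuous_Dfun k b))).continuousOn
      · intro z hz
        rw [interior_Iic] at hz
        rw [(hasDerivAt_h k b z).deriv]
        simpa using left_D_pos hk hkb (le_of_lt hz)
    have := hanti (Set.mem_Iic.mpr hy'.le) (Set.mem_Iic.mpr le_rfl) hy'
    dsimp only at this
    linarith

lemma left_g_mono : StrictMonoOn (gfun k b) (Set.Iic b) := by
  apply strictMonoOn_of_deriv_pos (convex_Iic b)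
  · exact ContinuousOn.div ((continuous_const.mul continuous_normPdf).continuousOn)
      (continuous_Dfun k b).continuousOn
      (fun y hy => ne_of_gt (left_D_pos hk hkb hy))
  · intro y hy
    rw [interior_Iic] at hy
    have hD := left_D_pos hk hkb (le_of_lt hy)
    have hg : HasDerivAt (gfun k b)
        ((k * (-y * normPdf y) * Dfun k b y - k * normPdf y * (-normPdf y)) / (Dfun k b y) ^ 2) y :=
      ((hasDerivAt_normPdf y).const_mul k).div (hasDerivAt_Dfun k b y) (ne_of_gt hD)
    rw [hg.deriv]
    have heq : (k * (-y * normPdf y) * Dfun k b y - k * normPdf y * (-normPdf y)) / (Dfun k b y) ^ 2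
        = k * normPdf y * (normPdf y - y * Dfun k b y) / (Dfun k b y) ^ 2 := by ring
    rw [heq]
    exact div_pos (mul_pos (mul_pos hk (normPdf_pos y)) (left_h_pos hk hkb (le_of_lt hy)))
      (pow_pos hD 2)

omit hkb in lemma gfun_self : gfun k b b = 1 := by
  unfold gfun
  rw [Dfun_self]
  exact div_self (ne_of_gt (mul_pos hk (normPdf_pos b)))

lemma left_g_lt_one {y : ℝ} (hy : y < b) : gfun k b y < 1 := by
  have hq := left_q_pos hk hkb hy
  have hD := left_D_pos hk hkb hy.le
  rw [gfun, div_lt_one hD]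
  linarith

end Left

section Right

variable {k b : ℝ} (hk : 0 < k) (hkb : 1 < k * b)
include hk hkb

lemma right_q_mono : StrictMonoOn (fun y => Dfun k b y - k * normPdf y) (Set.Ici b) := by
  have hb : 0 < b := by nlinarith
  apply strictMonoOn_of_deriv_pos (convex_Ici b)
  · exact ((continuous_Dfun k b).sub (continuous_const.mul continuous_normPdf)).continuousOn
  · intro y hy
    rw [interior_Ici] at hy
    rw [(hasDerivAt_q k b y).deriv]
    have h1 : 1 < k * y := lt_trans hkb (by nlinarith [Set.mem_Ioi.mp hy])
    nlinarith [normPdf_pos y]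

lemma right_q_pos {y : ℝ} (hy : b < y) : 0 < Dfun k b y - k * normPdf y := by
  have := right_q_mono hk hkb (Set.mem_Ici.mpr le_rfl) (Set.mem_Ici.mpr hy.le) hy
  simpa [Dfun_self] using this

lemma right_D_pos {y : ℝ} (hy : b ≤ y) : 0 < Dfun k b y := by
  rcases eq_or_lt_of_le hy with rfl | hy'
  · rw [Dfun_self]; exact mul_pos hk (normPdf_pos _)
  · have := right_q_pos hk hkb hy'
    nlinarith [mul_pos hk (normPdf_pos y)]

lemma right_h_neg {y : ℝ} (hy : b ≤ y) : normPdf y - y * Dfun k b y < 0 := by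
  have hb : normPdf b - b * Dfun k b b < 0 := by
    rw [Dfun_self]
    nlinarith [normPdf_pos b]
  rcases eq_or_lt_of_le hy with rfl | hy'
  · exact hb
  · have hanti : StrictAntiOn (fun y => normPdf y - y * Dfun k b y) (Set.Ici b) := by
      apply strictAntiOn_of_deriv_neg (convex_Ici b)
      · exact (continuous_normPdf.sub (continuous_id.mul (continuous_Dfun k b))).continuousOn
      · intro z hz
        rw [interior_Ici] at hz
        rw [(hasDerivAt_h k b z).deriv]
        simpa using right_D_pos hk hkb (le_of_lt hz)
    have := hanti (Set.mem_Ici.mpr le_rfl) (Set.mem_Ici.mpr hy'.le) hy'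
    dsimp only at this
    linarith

lemma right_g_anti : StrictAntiOn (gfun k b) (Set.Ici b) := by
  apply strictAntiOn_of_deriv_neg (convex_Ici b)
  · exact ContinuousOn.div ((continuous_const.mul continuous_normPdf).continuousOn)
      (continuous_Dfun k b).continuousOn
      (fun y hy => ne_of_gt (right_D_pos hk hkb hy))
  · intro y hy
    rw [interior_Ici] at hy
    have hD := right_D_pos hk hkb (le_of_lt hy)
    have hg : HasDerivAt (gfun k b)
        ((k * (-y * normPdf y) * Dfun k b y - k * normPdf y * (-normPdf y)) / (Dfun k b y) ^ 2) y :=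
      ((hasDerivAt_normPdf y).const_mul k).div (hasDerivAt_Dfun k b y) (ne_of_gt hD)
    rw [hg.deriv]
    have heq : (k * (-y * normPdf y) * Dfun k b y - k * normPdf y * (-normPdf y)) / (Dfun k b y) ^ 2
        = k * normPdf y * (normPdf y - y * Dfun k b y) / (Dfun k b y) ^ 2 := by ring
    rw [heq]
    apply div_neg_of_neg_of_pos _ (pow_pos hD 2)
    exact mul_neg_of_pos_of_neg (mul_pos hk (normPdf_pos y)) (right_h_neg hk hkb (le_of_lt hy))

lemma right_g_lt_one {y : ℝ} (hy : b < y) : gfun k b y < 1 := by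
  have hq := right_q_pos hk hkb hy
  have hD := right_D_pos hk hkb hy.le
  rw [gfun, div_lt_one hD]
  linarith

end Right
/-- If v_R < v_L, there is a unique v* ∈ (v_R, v_L) with
a₋*(v*) = a₊*(v*). -/
theorem vstar_exists_unique (r₁ lam ψ u c ξL ξR vL vR κL κR : ℝ)
    (hr : 0 < r₁) (hlam : 0 < lam) (hψ : 0 < ψ) (hu : 0 < u) (hc : 0 < c)
    (hξL : ξL = (-1 + Real.sqrt (1 + 8 * r₁ / ψ ^ 2)) / 2)
    (hξR : ξR = (-1 - Real.sqrt (1 + 8 * (r₁ + lam) / ψ ^ 2)) / 2)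
    (hvL : vL = u + c - r₁ * c / (ξL * ψ ^ 2))
    (hvR : vR = r₁ * (u + c) / (r₁ + lam) - r₁ * c / (ξR * ψ ^ 2))
    (hκL : κL = r₁ * c ^ 2 / (2 * ψ ^ 2))
    (hκR : κR = r₁ ^ 2 * c ^ 2 / (2 * (r₁ + lam) * ψ ^ 2))
    (aminus aplus : ℝ → ℝ)
    (haminus : ∀ x, aminus x = 1 -
      ((Real.sqrt (2 * r₁) / ψ) * normPdf ((x - u) / Real.sqrt κL)) /
        ((Real.sqrt (2 * r₁) / ψ) * normPdf ((vL - u) / Real.sqrt κL)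
          + normCdf ((vL - u) / Real.sqrt κL)
          - normCdf ((x - u) / Real.sqrt κL)))
    (haplus : ∀ x, aplus x = 1 -
      ((Real.sqrt (2 * (r₁ + lam)) / ψ) * normPdf ((x - r₁ * u / (r₁ + lam)) / Real.sqrt κR)) /
        ((Real.sqrt (2 * (r₁ + lam)) / ψ) * normPdf ((vR - r₁ * u / (r₁ + lam)) / Real.sqrt κR)
          + normCdf ((vR - r₁ * u / (r₁ + lam)) / Real.sqrt κR)
          - normCdf ((x - r₁ * u / (r₁ + lam)) / Real.sqrt κR)))
    (hvRL : vR < vL) :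
    ∃! vstar : ℝ, vstar ∈ Set.Ioo vR vL ∧ aminus vstar = aplus vstar := by
  have hψ2 : (0:ℝ) < ψ ^ 2 := by positivity
  have hrl : 0 < r₁ + lam := by linarith
  -- ξL facts
  have hEL2 : Real.sqrt (1 + 8 * r₁ / ψ ^ 2) ^ 2 = 1 + 8 * r₁ / ψ ^ 2 :=
    Real.sq_sqrt (by positivity)
  have hEL1 : 1 < Real.sqrt (1 + 8 * r₁ / ψ ^ 2) := by
    have h8 : 0 < 8 * r₁ / ψ ^ 2 := by positivity
    have := Real.sqrt_lt_sqrt (by norm_num : (0:ℝ) ≤ 1) (by linarith : (1:ℝ) < 1 + 8 * r₁ / ψ ^ 2)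
    simpa using this
  have hξL0 : 0 < ξL := by rw [hξL]; linarith
  have hξLeq : ξL ^ 2 + ξL = 2 * r₁ / ψ ^ 2 := by
    rw [hξL]; linear_combination hEL2 / 4
  -- ξR facts
  have hER2 : Real.sqrt (1 + 8 * (r₁ + lam) / ψ ^ 2) ^ 2 = 1 + 8 * (r₁ + lam) / ψ ^ 2 :=
    Real.sq_sqrt (by positivity)
  have hER1 : 0 < Real.sqrt (1 + 8 * (r₁ + lam) / ψ ^ 2) := Real.sqrt_pos.mpr (by positivity)
  have hξR0 : ξR < 0 := by rw [hξR]; linarith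
  have hξReq : ξR ^ 2 + ξR = 2 * (r₁ + lam) / ψ ^ 2 := by
    rw [hξR]; linear_combination hER2 / 4
  -- distance of cutoffs from means
  have hξLeq' : (ξL ^ 2 + ξL) * ψ ^ 2 = 2 * r₁ := by
    rw [hξLeq]; field_simp
  have hξReq' : (ξR ^ 2 + ξR) * ψ ^ 2 = 2 * (r₁ + lam) := by
    rw [hξReq]; field_simp
  have hvLu : vL - u = c * (1 - ξL) / 2 := by
    have h1 : r₁ * c / (ξL * ψ ^ 2) = c * (ξL + 1) / 2 := by
      rw [div_eq_iff (by positivity : ξL * ψ ^ 2 ≠ 0)]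
      linear_combination (-(c / 2)) * hξLeq'
    rw [hvL, h1]; ring
  have hvRm : vR - r₁ * u / (r₁ + lam) = r₁ * c * (1 - ξR) / (2 * (r₁ + lam)) := by
    have hξRne : ξR ≠ 0 := ne_of_lt hξR0
    have h1 : r₁ * c / (ξR * ψ ^ 2) = r₁ * c * (ξR + 1) / (2 * (r₁ + lam)) := by
      rw [div_eq_div_iff (by positivity) (by positivity)]
      linear_combination (-(r₁ * c)) * hξReq'
    rw [hvR, h1]
    field_simp
    ring
  -- sqrt values
  have hsL : Real.sqrt κL = Real.sqrt (2 * r₁) * c / (2 * ψ) := by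
    rw [hκL, show r₁ * c ^ 2 / (2 * ψ ^ 2) = (Real.sqrt (2 * r₁) * c / (2 * ψ)) ^ 2 from by
      rw [div_pow, mul_pow, Real.sq_sqrt (by positivity : (0:ℝ) ≤ 2 * r₁)]; try ring]
    exact Real.sqrt_sq (by positivity)
  have hsR : Real.sqrt κR = r₁ * c / (Real.sqrt (2 * (r₁ + lam)) * ψ) := by
    rw [hκR, show r₁ ^ 2 * c ^ 2 / (2 * (r₁ + lam) * ψ ^ 2)
        = (r₁ * c / (Real.sqrt (2 * (r₁ + lam)) * ψ)) ^ 2 from by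
      rw [div_pow, mul_pow, mul_pow, Real.sq_sqrt (by positivity : (0:ℝ) ≤ 2 * (r₁ + lam))]
      try ring]
    exact Real.sqrt_sq (by positivity)
  have hsLpos : 0 < Real.sqrt κL := by rw [hsL]; positivity
  have hsRpos : 0 < Real.sqrt κR := by rw [hsR]; positivity
  have hk1pos : 0 < Real.sqrt (2 * r₁) / ψ := by positivity
  have hk2pos : 0 < Real.sqrt (2 * (r₁ + lam)) / ψ := by positivity
  -- the key products k * b
  have hkb1 : (Real.sqrt (2 * r₁) / ψ) * ((vL - u) / Real.sqrt κL) = 1 - ξL := by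
    have hne : Real.sqrt (2 * r₁) ≠ 0 := by positivity
    rw [hvLu, hsL]
    field_simp
    try rw [Real.sq_sqrt (by norm_num : (0:ℝ) ≤ 2), Real.sq_sqrt hr.le]
    try ring
  have hkb2 : (Real.sqrt (2 * (r₁ + lam)) / ψ)
      * ((vR - r₁ * u / (r₁ + lam)) / Real.sqrt κR) = 1 - ξR := by
    have hne : Real.sqrt (2 * (r₁ + lam)) ≠ 0 := by positivity
    have e2 : Real.sqrt 2 * Real.sqrt 2 = 2 := Real.mul_self_sqrt (by norm_num)
    have erl : Real.sqrt (r₁ + lam) * Real.sqrt (r₁ + lam) = r₁ + lam :=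
      Real.mul_self_sqrt hrl.le
    rw [hvRm, hsR]
    field_simp
    linear_combination (1 - ξR) * Real.sq_sqrt (by positivity : (0:ℝ) ≤ 2 * (r₁ + lam))
  set k1 : ℝ := Real.sqrt (2 * r₁) / ψ with hk1def
  set k2 : ℝ := Real.sqrt (2 * (r₁ + lam)) / ψ with hk2def
  set m : ℝ := r₁ * u / (r₁ + lam) with hmdef
  set b1 : ℝ := (vL - u) / Real.sqrt κL with hb1def
  set b2 : ℝ := (vR - m) / Real.sqrt κR with hb2def
  have hb1lt : k1 * b1 < 1 := by rw [hkb1]; linarith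
  have hb2gt : 1 < k2 * b2 := by rw [hkb2]; linarith
  -- rewrite aminus/aplus via gfun
  have hamin : ∀ x, aminus x = 1 - gfun k1 b1 ((x - u) / Real.sqrt κL) := fun x => by
    rw [haminus x]
    try rfl
  have haplu : ∀ x, aplus x = 1 - gfun k2 b2 ((x - m) / Real.sqrt κR) := fun x => by
    rw [haplus x]
    try rfl
  -- transferred monotonicity
  have hmap1 : ∀ x ≤ vL, (x - u) / Real.sqrt κL ≤ b1 := by
    intro x hx; rw [hb1def]; gcongr <;> linarith
  have hmap2 : ∀ x, vR ≤ x → b2 ≤ (x - m) / Real.sqrt κR := by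
    intro x hx; rw [hb2def]; gcongr <;> linarith
  have haminus_anti : StrictAntiOn aminus (Set.Icc vR vL) := by
    intro x1 h1 x2 h2 h12
    rw [hamin x1, hamin x2]
    have hlt : (x1 - u) / Real.sqrt κL < (x2 - u) / Real.sqrt κL := by gcongr <;> linarith
    have := left_g_mono hk1pos hb1lt (Set.mem_Iic.mpr (hmap1 x1 h1.2))
      (Set.mem_Iic.mpr (hmap1 x2 h2.2)) hlt
    linarith
  have haplus_mono : StrictMonoOn aplus (Set.Icc vR vL) := by
    intro x1 h1 x2 h2 h12
    rw [haplu x1, haplu x2]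
    have hlt : (x1 - m) / Real.sqrt κR < (x2 - m) / Real.sqrt κR := by gcongr <;> linarith
    have := right_g_anti hk2pos hb2gt (Set.mem_Ici.mpr (hmap2 x1 h1.1))
      (Set.mem_Ici.mpr (hmap2 x2 h2.1)) hlt
    linarith
  -- endpoint values
  have haminus_vL : aminus vL = 0 := by
    rw [hamin vL]
    rw [show (vL - u) / Real.sqrt κL = b1 from rfl, gfun_self hk1pos]
    norm_num
  have haplus_vR : aplus vR = 0 := by
    rw [haplu vR]
    rw [show (vR - m) / Real.sqrt κR = b2 from rfl, gfun_self hk2pos]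
    norm_num
  have haminus_vR : 0 < aminus vR := by
    rw [hamin vR]
    have hlt : (vR - u) / Real.sqrt κL < b1 := by rw [hb1def]; gcongr <;> linarith
    have := left_g_lt_one hk1pos hb1lt hlt
    linarith
  have haplus_vL : 0 < aplus vL := by
    rw [haplu vL]
    have hlt : b2 < (vL - m) / Real.sqrt κR := by rw [hb2def]; gcongr <;> linarith
    have := right_g_lt_one hk2pos hb2gt hlt
    linarith
  -- the difference function
  set f : ℝ → ℝ := fun x => aminus x - aplus x with hfdef
  have hfanti : StrictAntiOn f (Set.Icc vR vL) := by
    intro x1 h1 x2 h2 h12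
    have := haminus_anti h1 h2 h12
    have := haplus_mono h1 h2 h12
    simp only [hfdef]
    linarith
  -- continuity
  have hinner1 : Continuous fun x : ℝ => (x - u) / Real.sqrt κL := by fun_prop
  have hinner2 : Continuous fun x : ℝ => (x - m) / Real.sqrt κR := by fun_prop
  have hcont1 : ContinuousOn (fun x => gfun k1 b1 ((x - u) / Real.sqrt κL)) (Set.Icc vR vL) := by
    apply ContinuousOn.div
    · exact (continuous_const.mul (continuous_normPdf.comp hinner1)).continuousOn
    · exact ((continuous_Dfun k1 b1).comp hinner1).continuousOn
    · intro x hx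
      exact ne_of_gt (left_D_pos hk1pos hb1lt (hmap1 x hx.2))
  have hcont2 : ContinuousOn (fun x => gfun k2 b2 ((x - m) / Real.sqrt κR)) (Set.Icc vR vL) := by
    apply ContinuousOn.div
    · exact (continuous_const.mul (continuous_normPdf.comp hinner2)).continuousOn
    · exact ((continuous_Dfun k2 b2).comp hinner2).continuousOn
    · intro x hx
      exact ne_of_gt (right_D_pos hk2pos hb2gt (hmap2 x hx.1))
  have hcontf : ContinuousOn f (Set.Icc vR vL) := by
    have h0 : ContinuousOn
        (fun x => (1 - gfun k1 b1 ((x - u) / Real.sqrt κL))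
          - (1 - gfun k2 b2 ((x - m) / Real.sqrt κR))) (Set.Icc vR vL) :=
      (continuousOn_const.sub hcont1).sub (continuousOn_const.sub hcont2)
    exact h0.congr fun x hx => by simp only [hfdef, hamin x, haplu x]
  -- sign change
  have hfvR : 0 < f vR := by simp only [hfdef, haplus_vR]; linarith
  have hfvL : f vL < 0 := by simp only [hfdef, haminus_vL]; linarith
  -- existence via IVT
  have hmem : (0:ℝ) ∈ Set.Ioo (f vL) (f vR) := ⟨hfvL, hfvR⟩
  obtain ⟨x, hxmem, hfx⟩ := intermediate_value_Ioo' (le_of_lt hvRL) hcontf hmem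
  refine ⟨x, ⟨hxmem, by simp only [hfdef] at hfx; linarith⟩, ?_⟩
  rintro y ⟨hymem, hyeq⟩
  have hfy : f y = 0 := by simp only [hfdef]; linarith
  exact hfanti.injOn (Set.Ioo_subset_Icc_self hymem) (Set.Ioo_subset_Icc_self hxmem)
    (by rw [hfy, hfx])
end

section
/- Let r₁, ψ, c > 0 and u ∈ ℝ, set κ := r₁c²/(2ψ²), and let z₁ < z₂ be reals. Suppose v : ℝ → ℝ is twice continuously differentiable on (z₁, z₂), v′(z) < 0 for all z ∈ (z₁, z₂), and v(z) = u + κ·(v″(z) − v′(z))/v′(z)² for all z ∈ (z₁, z₂). Define a(z) := 1 + r₁c/(ψ²·v′(z)), p(z) := e^z/(1+e^z), and EP(z) := ψ·(1 − (1 − a(z))·p(z)). Then EP is differentiable on (z₁, z₂) and satisfies ψ − EP(z) − EP′(z)/p(z) = 2ψ·(v(z) − u)/c for all z ∈ (z₁, z₂). -/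
/-- In the interior mixing region, with a(z) = 1 + r₁c/(ψ²·v′(z)),
p(z) = e^z/(1+e^z) and EP(z) = ψ·(1 − (1 − a(z))·p(z)), the expected performance EP is
differentiable and satisfies ψ − EP(z) − EP′(z)/p(z) = 2ψ·(v(z) − u)/c. -/
theorem expected_performance_ode (r₁ ψ c u z₁ z₂ κ : ℝ)
    (hr : 0 < r₁) (hψ : 0 < ψ) (hc : 0 < c) (hz : z₁ < z₂)
    (hκ : κ = r₁ * c ^ 2 / (2 * ψ ^ 2))
    (v a p EP : ℝ → ℝ) (hv : ContDiffOn ℝ 2 v (Set.Ioo z₁ z₂))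
    (hv' : ∀ z ∈ Set.Ioo z₁ z₂, deriv v z < 0)
    (hode : ∀ z ∈ Set.Ioo z₁ z₂,
      v z = u + κ * (deriv (deriv v) z - deriv v z) / (deriv v z) ^ 2)
    (ha : ∀ z, a z = 1 + r₁ * c / (ψ ^ 2 * deriv v z))
    (hp : ∀ z, p z = Real.exp z / (1 + Real.exp z))
    (hEP : ∀ z, EP z = ψ * (1 - (1 - a z) * p z)) :
    DifferentiableOn ℝ EP (Set.Ioo z₁ z₂) ∧
      ∀ z ∈ Set.Ioo z₁ z₂, ψ - EP z - deriv EP z / p z = 2 * ψ * (v z - u) / c := by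
  have hψ0 : ψ ≠ 0 := ne_of_gt hψ
  -- EP as an explicit function
  have hEPfun : EP = fun z => ψ + r₁ * c / ψ * (p z / deriv v z) := by
    funext z
    rw [hEP, ha]
    by_cases h : deriv v z = 0
    · simp [h]
    · field_simp
      ring
  -- deriv v is C¹, hence differentiable, on the open interval
  have hv1 : ContDiffOn ℝ 1 (deriv v) (Set.Ioo z₁ z₂) :=
    hv.deriv_of_isOpen isOpen_Ioo (by norm_num)
  have hvd : ∀ z ∈ Set.Ioo z₁ z₂, HasDerivAt (deriv v) (deriv (deriv v) z) z := by
    intro z hz'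
    exact ((hv1.differentiableOn one_ne_zero).differentiableAt
      (isOpen_Ioo.mem_nhds hz')).hasDerivAt
  -- derivative of p
  have hpd : ∀ z : ℝ, HasDerivAt p (p z * (1 - p z)) z := by
    intro z
    have hden : (1 : ℝ) + Real.exp z ≠ 0 := by positivity
    have h2 : HasDerivAt (fun x => 1 + Real.exp x) (Real.exp z) z := by
      exact (Real.hasDerivAt_exp z).const_add 1
    have h1 : HasDerivAt (fun z => Real.exp z / (1 + Real.exp z))
        ((Real.exp z * (1 + Real.exp z) - Real.exp z * Real.exp z) /
          (1 + Real.exp z) ^ 2) z := (Real.hasDerivAt_exp z).div h2 hden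
    have hfun : p = fun z => Real.exp z / (1 + Real.exp z) := funext hp
    rw [hfun]
    convert h1 using 1
    simp only
    field_simp
  -- derivative of EP
  have hEPd : ∀ z ∈ Set.Ioo z₁ z₂,
      HasDerivAt EP (r₁ * c / ψ *
        ((p z * (1 - p z) * deriv v z - p z * deriv (deriv v) z) / (deriv v z) ^ 2)) z := by
    intro z hz'
    have hv0 : deriv v z ≠ 0 := ne_of_lt (hv' z hz')
    have := (((hpd z).div (hvd z hz') hv0).const_mul (r₁ * c / ψ)).const_add ψ
    rw [hEPfun]
    exact this
  have hp0 : ∀ z : ℝ, 0 < p z := by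
    intro z
    rw [hp]
    positivity
  constructor
  · intro z hz'
    exact ((hEPd z hz').differentiableAt.differentiableWithinAt)
  · intro z hz'
    have hv0 : deriv v z ≠ 0 := ne_of_lt (hv' z hz')
    have hde : deriv EP z = r₁ * c / ψ *
        ((p z * (1 - p z) * deriv v z - p z * deriv (deriv v) z) / (deriv v z) ^ 2) :=
      (hEPd z hz').deriv
    have hEPz : EP z = ψ + r₁ * c / ψ * (p z / deriv v z) := by rw [hEPfun]
    have hvz := hode z hz'
    have hpz : p z ≠ 0 := ne_of_gt (hp0 z)
    rw [hde, hEPz, hvz, hκ]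
    field_simp
    ring
end
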